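/- The number of labeled rooted forests on n vertices with exactly k roots (trees) equals binomial(n-1, k-1) * n^(n-k). -/

import Mathlib

/-- `iterParent f m v` follows the parent map `f` for `m` steps starting at `v`
(`none` means undefined / no parent). -/
def iterParent {n : ℕ} (f : Fin n → Option (Fin n)) : ℕ → Fin n → Option (Fin n)
  | 0, v => some v
  | m + 1, v => (iterParent f m v).bind f

/-- A parent function `f : Fin n → Option (Fin n)` encodes a labeled rooted forest
iff following parents from any vertex eventually (within `n` steps) terminates. -/
def IsRootedForest {n : ℕ} (f : Fin n → Option (Fin n)) : Prop :=
  ∀ v, iterParent f n v = none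

/-- The number of roots (vertices with no parent) of a labeled rooted forest. -/
def numRoots {n : ℕ} (f : Fin n → Option (Fin n)) : ℕ :=
  (Finset.univ.filter fun v => f v = none).card

instance {n : ℕ} : DecidablePred (@IsRootedForest n) := fun f =>
  inferInstanceAs (Decidable (∀ v, iterParent f n v = none))

section Basic
variable {n : ℕ}

@[simp] lemma iterParent_zero (f : Fin n → Option (Fin n)) (v : Fin n) :
    iterParent f 0 v = some v := rfl

lemma iterParent_succ (f : Fin n → Option (Fin n)) (m : ℕ) (v : Fin n) :
    iterParent f (m + 1) v = (iterParent f m v).bind f := rfl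

lemma iterParent_one (f : Fin n → Option (Fin n)) (v : Fin n) :
    iterParent f 1 v = f v := by
  simp [iterParent_succ]

lemma iterParent_add (f : Fin n → Option (Fin n)) (a b : ℕ) (v : Fin n) :
    iterParent f (a + b) v = (iterParent f b v).bind (iterParent f a) := by
  induction a with
  | zero => rw [Nat.zero_add]; cases h : iterParent f b v <;> simp [h, iterParent]
  | succ a ih =>
      have h : a + 1 + b = (a + b) + 1 := by omega
      rw [h, iterParent_succ, ih]
      cases iterParent f b v <;> simp [iterParent_succ]

lemma iterParent_none_mono {f : Fin n → Option (Fin n)} {a b : ℕ} (h : a ≤ b) {v : Fin n}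
    (ha : iterParent f a v = none) : iterParent f b v = none := by
  obtain ⟨c, rfl⟩ := Nat.exists_eq_add_of_le h
  rw [Nat.add_comm, iterParent_add, ha]
  rfl

lemma no_cycle {f : Fin n → Option (Fin n)} (hf : IsRootedForest f) (v : Fin n) (m : ℕ) :
    iterParent f (m + 1) v ≠ some v := by
  intro h
  have key : ∀ t, iterParent f (t * (m + 1)) v = some v := by
    intro t
    induction t with
    | zero => simp
    | succ t ih =>
        have : (t + 1) * (m + 1) = (t * (m + 1)) + (m + 1) := by ring
        rw [this, iterParent_add, h, Option.bind_some, ih]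
  have h1 := key n
  have h2 : iterParent f (n * (m + 1)) v = none :=
    iterParent_none_mono (Nat.le_mul_of_pos_right n (Nat.succ_pos m)) (hf v)
  rw [h1] at h2; simp at h2

lemma isRootedForest_of_no_cycle {g : Fin n → Option (Fin n)}
    (h : ∀ (v : Fin n) (m : ℕ), iterParent g (m + 1) v ≠ some v) : IsRootedForest g := by
  intro v
  by_contra hne
  have hsome : ∀ m, m ≤ n → (iterParent g m v).isSome := by
    intro m hm
    cases hmv : iterParent g m v with
    | none => exact absurd (iterParent_none_mono hm hmv) hne
    | some w => rfl
  set F : Fin (n + 1) → Fin n := fun i => (iterParent g i v).get (hsome i (Nat.le_of_lt_succ i.isLt))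
  have hninj : ¬ Function.Injective F := by
    intro hinj
    have := Fintype.card_le_of_injective F hinj
    simp at this
  rw [Function.not_injective_iff] at hninj
  obtain ⟨a, b, hab, hne'⟩ := hninj
  -- wlog a < b
  have main : ∀ (a b : Fin (n+1)), (a : ℕ) < (b : ℕ) → F a = F b → False := by
    intro a b hlt heq
    have ha : iterParent g a v = some (F a) := by simp [F]
    have hb : iterParent g b v = some (F b) := by simp [F]
    have hsplit : (b : ℕ) = ((b : ℕ) - a) + a := by omega
    have : iterParent g ((b : ℕ) - a) (F a) = some (F a) := by
      have := iterParent_add g ((b:ℕ) - a) (a:ℕ) v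
      rw [← hsplit, hb, ha, Option.bind_some] at this
      rw [← heq] at this
      exact this.symm
    obtain ⟨s, hs⟩ : ∃ s, (b : ℕ) - a = s + 1 := ⟨(b:ℕ) - a - 1, by omega⟩
    rw [hs] at this
    exact h _ _ this
  have hne'' : (a : ℕ) ≠ (b : ℕ) := fun hh => hne' (Fin.ext hh)
  rcases Nat.lt_or_ge (a : ℕ) (b : ℕ) with h1 | h1
  · exact main a b h1 hab
  · exact main b a (by omega) hab.symm

end Basic

section Roots
variable {n : ℕ}

def rootAux (f : Fin n → Option (Fin n)) : ℕ → Fin n → Fin n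
  | 0, v => v
  | m + 1, v =>
    match f v with
    | none => v
    | some p => rootAux f m p

def rootOf (f : Fin n → Option (Fin n)) (v : Fin n) : Fin n := rootAux f n v

lemma rootAux_spec (f : Fin n → Option (Fin n)) :
    ∀ (fuel : ℕ) (v : Fin n), ∃ m ≤ fuel, iterParent f m v = some (rootAux f fuel v) := by
  intro fuel
  induction fuel with
  | zero => intro v; exact ⟨0, le_refl 0, rfl⟩
  | succ fuel ih =>
      intro v
      cases hv : f v with
      | none => exact ⟨0, Nat.zero_le _, by simp [rootAux, hv]⟩
      | some p =>
          obtain ⟨m, hm, hmp⟩ := ih p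
          refine ⟨m + 1, by omega, ?_⟩
          rw [iterParent_add f m 1, iterParent_one, hv, Option.bind_some, hmp]
          simp [rootAux, hv]

lemma rootAux_none (f : Fin n → Option (Fin n)) :
    ∀ (fuel : ℕ) (v : Fin n), iterParent f fuel v = none → f (rootAux f fuel v) = none := by
  intro fuel
  induction fuel with
  | zero => intro v h; exact absurd h (by simp)
  | succ fuel ih =>
      intro v h
      cases hv : f v with
      | none => simpa [rootAux, hv] using hv
      | some p =>
          have hp : iterParent f fuel p = none := by
            have := iterParent_add f fuel 1 v
            rw [iterParent_one, hv, Option.bind_some] at this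
            rw [← this]; exact h
          simpa [rootAux, hv] using ih p hp

lemma exists_iterParent_rootOf {f : Fin n → Option (Fin n)} (v : Fin n) :
    ∃ m ≤ n, iterParent f m v = some (rootOf f v) := rootAux_spec f n v

lemma rootOf_is_root {f : Fin n → Option (Fin n)} (hf : IsRootedForest f) (v : Fin n) :
    f (rootOf f v) = none := rootAux_none f n v (hf v)

lemma rootAux_of_none {f : Fin n → Option (Fin n)} {v : Fin n} (fuel : ℕ) (h : f v = none) :
    rootAux f fuel v = v := by
  cases fuel <;> simp [rootAux, h]

lemma root_unique {f : Fin n → Option (Fin n)} {v w w' : Fin n} {b b' : ℕ}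
    (hb : iterParent f b v = some w) (hw : f w = none)
    (hb' : iterParent f b' v = some w') (hw' : f w' = none) : w = w' := by
  have key : ∀ (b b' : ℕ) (w w' : Fin n), b ≤ b' → iterParent f b v = some w → f w = none →
      iterParent f b' v = some w' → w = w' := by
    intro b b' w w' hle hb hw hb'
    obtain ⟨c, rfl⟩ := Nat.exists_eq_add_of_le hle
    cases c with
    | zero => rw [Nat.add_zero, hb] at hb'; exact Option.some_injective _ hb'
    | succ c =>
        exfalso
        have : iterParent f (b + (c+1)) v = none := by
          rw [Nat.add_comm, iterParent_add, hb, Option.bind_some]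
          have : iterParent f (c + 1) w = none := by
            rw [iterParent_add f c 1, iterParent_one, hw]; rfl
          exact this
        rw [this] at hb'; simp at hb'
  rcases Nat.le_total b b' with h | h
  · exact key b b' w w' h hb hw hb'
  · exact (key b' b w' w h hb' hw' hb).symm

lemma rootOf_eq {f : Fin n → Option (Fin n)} (hf : IsRootedForest f) {v w : Fin n} {b : ℕ}
    (hb : iterParent f b v = some w) (hw : f w = none) : rootOf f v = w := by
  obtain ⟨m, _, hm⟩ := exists_iterParent_rootOf (f := f) v
  exact root_unique hm (rootOf_is_root hf v) hb hw

end Roots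

section Sub
variable {n : ℕ}

lemma subFun_iterParent {g f : Fin n → Option (Fin n)} (h : ∀ v, g v = none ∨ g v = f v) :
    ∀ (m : ℕ) (v w : Fin n), iterParent g m v = some w → iterParent f m v = some w := by
  intro m
  induction m with
  | zero => intro v w hw; exact hw
  | succ m ih =>
      intro v w hw
      rw [iterParent_succ] at hw
      cases hg : iterParent g m v with
      | none => rw [hg] at hw; simp at hw
      | some u =>
          rw [hg, Option.bind_some] at hw
          rw [iterParent_succ, ih v u hg, Option.bind_some]
          rcases h u with hu | hu
          · rw [hu] at hw; simp at hw
          · rw [← hu]; exact hw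

lemma subFun_forest {g f : Fin n → Option (Fin n)} (h : ∀ v, g v = none ∨ g v = f v)
    (hf : IsRootedForest f) : IsRootedForest g := by
  intro v
  cases hg : iterParent g n v with
  | none => rfl
  | some w => exact absurd (hf v) (by rw [subFun_iterParent h n v w hg]; simp)

end Sub

section Update
variable {n : ℕ}

lemma reach_lemma {g f : Fin n → Option (Fin n)} {c : Fin n}
    (hagree : ∀ x, x ≠ c → g x = f x) :
    ∀ (m : ℕ) (v : Fin n), iterParent g m v = some c → ∃ b ≤ m, iterParent f b v = some c := by
  intro m
  induction m with
  | zero => intro v h; exact ⟨0, le_refl 0, h⟩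
  | succ m ih =>
      intro v h
      by_cases hvc : v = c
      · exact ⟨0, Nat.zero_le _, by rw [hvc]; rfl⟩
      · have h1 : iterParent g (m + 1) v = (g v).bind (iterParent g m) := by
          rw [iterParent_add g m 1, iterParent_one]
        rw [h1] at h
        cases hgv : g v with
        | none => rw [hgv] at h; simp at h
        | some u =>
            rw [hgv, Option.bind_some] at h
            obtain ⟨b, hb, hfb⟩ := ih u h
            refine ⟨b + 1, by omega, ?_⟩
            rw [iterParent_add f b 1, iterParent_one, ← hagree v hvc, hgv, Option.bind_some]
            exact hfb

lemma update_isRootedForest {f : Fin n → Option (Fin n)} (hf : IsRootedForest f) {c p : Fin n}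
    (hc : f c = none) (hp : rootOf f p ≠ c) :
    IsRootedForest (Function.update f c (some p)) := by
  set g := Function.update f c (some p) with hg
  have hagree : ∀ x, x ≠ c → g x = f x := fun x hx => Function.update_of_ne hx _ f
  apply isRootedForest_of_no_cycle
  intro w m hcyc
  by_cases hthru : ∃ a ≤ m + 1, iterParent g a w = some c
  · obtain ⟨a, ha, hac⟩ := hthru
    have hrot : iterParent g (m + 1) c = some c := by
      have h1 : iterParent g (a + (m + 1)) w = some c := by
        rw [iterParent_add, hcyc, Option.bind_some, hac]
      have h2 : iterParent g ((m + 1) + a) w = (iterParent g a w).bind (iterParent g (m + 1)) :=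
        iterParent_add g (m + 1) a w
      rw [Nat.add_comm a (m+1)] at h1
      rw [h1, hac, Option.bind_some] at h2
      exact h2.symm
    have hgc : g c = some p := Function.update_self c (some p) f
    have hstep : iterParent g m p = some c := by
      have := iterParent_add g m 1 c
      rw [iterParent_one, hgc, Option.bind_some] at this
      rw [← this]; exact hrot
    obtain ⟨b, _, hfb⟩ := reach_lemma hagree m p hstep
    exact hp (rootOf_eq hf hfb hc)
  · push_neg at hthru
    have hagree2 : ∀ a, a ≤ m + 1 → iterParent g a w = iterParent f a w := by
      intro a
      induction a with
      | zero => intro _; rfl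
      | succ a ih =>
          intro ha
          have ha' : a ≤ m + 1 := by omega
          rw [iterParent_succ, iterParent_succ, ih ha']
          cases hfa : iterParent f a w with
          | none => rfl
          | some u =>
              have hu : u ≠ c := by
                intro huc
                exact (hthru a ha') (by rw [ih ha', hfa, huc])
              rw [Option.bind_some, Option.bind_some, hagree u hu]
    have : iterParent f (m + 1) w = some w := by
      rw [← hagree2 (m + 1) (le_refl _)]; exact hcyc
    exact no_cycle hf w m this

lemma numRoots_update {f : Fin n → Option (Fin n)} {c : Fin n} (p : Fin n) (hc : f c = none) :
    numRoots (Function.update f c (some p)) = numRoots f - 1 := by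
  unfold numRoots
  have hset : (Finset.univ.filter fun v => Function.update f c (some p) v = none)
      = (Finset.univ.filter fun v => f v = none).erase c := by
    ext x
    simp only [Finset.mem_filter, Finset.mem_erase, Finset.mem_univ, true_and]
    constructor
    · intro hx
      by_cases hxc : x = c
      · rw [hxc, Function.update_self] at hx; simp at hx
      · rw [Function.update_of_ne hxc] at hx; exact ⟨hxc, hx⟩
    · intro ⟨hxc, hx⟩
      rw [Function.update_of_ne hxc]; exact hx
  rw [hset, Finset.card_erase_of_mem (by simp [hc])]

end Update

section Build
variable {n : ℕ}

def build : List (Fin n × Fin n) → (Fin n → Option (Fin n))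
  | [] => fun _ => none
  | e :: l => Function.update (build l) e.1 (some e.2)

def ValidList : List (Fin n × Fin n) → Prop
  | [] => True
  | e :: l => ValidList l ∧ build l e.1 = none ∧ rootOf (build l) e.2 ≠ e.1

instance decValidList : ∀ l : List (Fin n × Fin n), Decidable (ValidList l)
  | [] => isTrue trivial
  | e :: l => by
      have := decValidList l
      dsimp [ValidList]
      infer_instance

lemma valid_forest : ∀ l : List (Fin n × Fin n), ValidList l → IsRootedForest (build l) := by
  intro l
  induction l with
  | nil =>
      intro _ v
      exact iterParent_none_mono (Fin.pos v) (by rw [iterParent_one]; rfl)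
  | cons e l ih =>
      intro ⟨hval, h1, h2⟩
      exact update_isRootedForest (ih hval) h1 h2

lemma build_eq_iff : ∀ l : List (Fin n × Fin n), ValidList l →
    ∀ v w, (build l v = some w ↔ (v, w) ∈ l) := by
  intro l
  induction l with
  | nil => intro _ v w; simp [build]
  | cons e l ih =>
      rintro ⟨hval, h1, _⟩ v w
      by_cases hv : v = e.1
      · subst hv
        rw [show build (e :: l) = Function.update (build l) e.1 (some e.2) from rfl,
          Function.update_self]
        constructor
        · intro h
          have hw : e.2 = w := Option.some_injective _ h
          subst hw
          exact List.mem_cons_self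
        · intro h
          rcases List.mem_cons.mp h with h | h
          · rw [show w = e.2 from (Prod.ext_iff.mp h).2]
          · exact absurd ((ih hval e.1 w).mpr h) (by rw [h1]; simp)
      · rw [show build (e :: l) = Function.update (build l) e.1 (some e.2) from rfl,
          Function.update_of_ne hv, ih hval v w]
        constructor
        · intro h; exact List.mem_cons_of_mem _ h
        · intro h
          rcases List.mem_cons.mp h with h | h
          · exact absurd (congrArg Prod.fst h) hv
          · exact h

lemma valid_numRoots : ∀ l : List (Fin n × Fin n), ValidList l →
    numRoots (build l) + l.length = n := by
  intro l
  induction l with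
  | nil => simp [build, numRoots]
  | cons e l ih =>
      rintro ⟨hval, h1, h2⟩
      have hroots := ih hval
      have hmem : e.1 ∈ Finset.univ.filter (fun v => build l v = none) := by simp [h1]
      have hpos : 1 ≤ numRoots (build l) := by
        unfold numRoots; exact Finset.card_pos.mpr ⟨e.1, hmem⟩
      have : numRoots (build (e :: l)) = numRoots (build l) - 1 :=
        numRoots_update e.2 h1
      simp only [List.length_cons]
      omega

lemma valid_nodup_fst : ∀ l : List (Fin n × Fin n), ValidList l →
    (l.map Prod.fst).Nodup := by
  intro l
  induction l with
  | nil => intro _; simp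
  | cons e l ih =>
      rintro ⟨hval, h1, _⟩
      simp only [List.map_cons, List.nodup_cons]
      refine ⟨?_, ih hval⟩
      intro hmem
      obtain ⟨⟨c, p⟩, hcp, hfst⟩ := List.mem_map.mp hmem
      have hb : build l c = some p := (build_eq_iff l hval c p).mpr hcp
      have hc : c = e.1 := hfst
      rw [hc] at hb
      rw [hb] at h1
      simp at h1

lemma valid_of_edges {F : Fin n → Option (Fin n)} (hF : IsRootedForest F) :
    ∀ l : List (Fin n × Fin n), (∀ e ∈ l, F e.1 = some e.2) → (l.map Prod.fst).Nodup →
    ValidList l ∧ (∀ v, build l v = none ∨ build l v = F v) := by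
  intro l
  induction l with
  | nil => intro _ _; exact ⟨trivial, fun v => Or.inl rfl⟩
  | cons e l ih =>
      intro hedges hnodup
      simp only [List.map_cons, List.nodup_cons] at hnodup
      obtain ⟨hhead, hnodup'⟩ := hnodup
      obtain ⟨hval, hsub⟩ := ih (fun e' he' => hedges e' (List.mem_cons_of_mem _ he')) hnodup'
      have hgforest : IsRootedForest (build l) := subFun_forest hsub hF
      have hbe1 : build l e.1 = none := by
        cases hb : build l e.1 with
        | none => rfl
        | some w =>
            exfalso
            have := (build_eq_iff l hval e.1 w).mp hb
            exact hhead (List.mem_map.mpr ⟨(e.1, w), this, rfl⟩)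
      have hroot : rootOf (build l) e.2 ≠ e.1 := by
        intro hcon
        obtain ⟨b, _, hb⟩ := exists_iterParent_rootOf (f := build l) e.2
        rw [hcon] at hb
        have hFb : iterParent F b e.2 = some e.1 := subFun_iterParent hsub b e.2 e.1 hb
        have hFe : F e.1 = some e.2 := hedges e (List.mem_cons_self)
        have : iterParent F (b + 1) e.1 = some e.1 := by
          rw [iterParent_add F b 1, iterParent_one, hFe, Option.bind_some]; exact hFb
        exact no_cycle hF e.1 b this
      refine ⟨⟨hval, hbe1, hroot⟩, ?_⟩
      intro v
      by_cases hv : v = e.1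
      · subst hv
        right
        rw [show build (e :: l) = Function.update (build l) e.1 (some e.2) from rfl,
          Function.update_self]
        exact (hedges e (List.mem_cons_self)).symm
      · rw [show build (e :: l) = Function.update (build l) e.1 (some e.2) from rfl,
          Function.update_of_ne hv]
        exact hsub v

end Build

section Edges
variable {n : ℕ}

def edges (F : Fin n → Option (Fin n)) : Finset (Fin n × Fin n) :=
  Finset.univ.filter fun e => F e.1 = some e.2

def edgesEquiv (F : Fin n → Option (Fin n)) :
    {e : Fin n × Fin n // F e.1 = some e.2} ≃ {v : Fin n // F v ≠ none} where
  toFun e := ⟨e.1.1, by rw [e.2]; simp⟩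
  invFun v := ⟨(v.1, Option.get _ (Option.ne_none_iff_isSome.mp v.2)), (Option.some_get _).symm⟩
  left_inv := by
    rintro ⟨⟨v, w⟩, he⟩
    apply Subtype.ext
    simp only at he ⊢
    simp [he]
  right_inv v := rfl

lemma card_edges (F : Fin n → Option (Fin n)) : (edges F).card = n - numRoots F := by
  have h1 : (edges F).card = Fintype.card {e : Fin n × Fin n // F e.1 = some e.2} :=
    (Fintype.card_subtype _).symm
  rw [h1, Fintype.card_congr (edgesEquiv F), Fintype.card_subtype]
  have := Finset.card_filter_add_card_filter_not
    (s := (Finset.univ : Finset (Fin n))) (p := fun v => F v = none)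
  unfold numRoots
  simp only [Finset.card_univ, Fintype.card_fin] at this
  simp only [ne_eq]
  omega

lemma card_validEdges {g : Fin n → Option (Fin n)} (hg : IsRootedForest g) :
    Fintype.card {e : Fin n × Fin n // g e.1 = none ∧ rootOf g e.2 ≠ e.1}
      = n * (numRoots g - 1) := by
  have E : {e : Fin n × Fin n // g e.1 = none ∧ rootOf g e.2 ≠ e.1}
      ≃ (p : Fin n) × {c : Fin n // g c = none ∧ rootOf g p ≠ c} :=
    ⟨fun e => ⟨e.1.2, ⟨e.1.1, e.2⟩⟩, fun x => ⟨(x.2.1, x.1), x.2.2⟩,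
      fun e => rfl, fun x => rfl⟩
  rw [Fintype.card_congr E, Fintype.card_sigma]
  have key : ∀ p : Fin n, Fintype.card {c : Fin n // g c = none ∧ rootOf g p ≠ c}
      = numRoots g - 1 := by
    intro p
    rw [Fintype.card_subtype]
    have hset : (Finset.univ.filter fun c => g c = none ∧ rootOf g p ≠ c)
        = (Finset.univ.filter fun v => g v = none).erase (rootOf g p) := by
      ext x
      simp only [Finset.mem_filter, Finset.mem_erase, Finset.mem_univ, true_and]
      constructor
      · rintro ⟨h1, h2⟩; exact ⟨fun hh => h2 hh.symm, h1⟩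
      · rintro ⟨h1, h2⟩; exact ⟨h2, fun hh => h1 hh.symm⟩
    rw [hset, Finset.card_erase_of_mem (by simp [rootOf_is_root hg])]
    rfl
  simp only [key]
  rw [Finset.sum_const, Finset.card_univ, Fintype.card_fin, smul_eq_mul]

end Edges

section Seq
variable {n : ℕ}

def SeqType (n m : ℕ) : Type :=
  {l : List.Vector (Fin n × Fin n) m // ValidList l.1}

instance (m : ℕ) : Fintype (SeqType n m) := Subtype.fintype _

lemma card_seq_zero : Fintype.card (SeqType n 0) = 1 := by
  rw [Fintype.card_eq_one_iff]
  refine ⟨⟨⟨[], rfl⟩, trivial⟩, ?_⟩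
  rintro ⟨⟨l, hl⟩, hv⟩
  apply Subtype.ext
  apply Subtype.ext
  exact List.length_eq_zero_iff.mp hl

noncomputable def seqSuccEquiv (m : ℕ) :
    (Σ l : SeqType n m,
      {e : Fin n × Fin n // build l.1.1 e.1 = none ∧ rootOf (build l.1.1) e.2 ≠ e.1})
      ≃ SeqType n (m + 1) := by
  apply Equiv.ofBijective
    (fun x => (⟨⟨x.2.1 :: x.1.1.1, by simp [x.1.1.2]⟩, ⟨x.1.2, x.2.2⟩⟩ : SeqType n (m+1)))
  constructor
  · rintro ⟨⟨⟨l1, hl1⟩, hv1⟩, ⟨e1, he1⟩⟩ ⟨⟨⟨l2, hl2⟩, hv2⟩, ⟨e2, he2⟩⟩ h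
    have hlists : e1 :: l1 = e2 :: l2 := congrArg (fun s => s.1.1) h
    have he : e1 = e2 := (List.cons.injEq _ _ _ _ ▸ hlists).1
    have hl : l1 = l2 := (List.cons.injEq _ _ _ _ ▸ hlists).2
    subst he; subst hl
    rfl
  · rintro ⟨⟨l, hl⟩, hv⟩
    cases l with
    | nil => exact absurd hl (by simp)
    | cons e l' =>
        have hl' : l'.length = m := by simpa using hl
        obtain ⟨hval, h1, h2⟩ := hv
        exact ⟨⟨⟨⟨l', hl'⟩, hval⟩, ⟨e, h1, h2⟩⟩, by apply Subtype.ext; apply Subtype.ext; rfl⟩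

lemma card_seq_succ (m : ℕ) :
    Fintype.card (SeqType n (m + 1)) = Fintype.card (SeqType n m) * (n * (n - 1 - m)) := by
  rw [← Fintype.card_congr (seqSuccEquiv m), Fintype.card_sigma]
  have key : ∀ l : SeqType n m,
      Fintype.card {e : Fin n × Fin n // build l.1.1 e.1 = none ∧ rootOf (build l.1.1) e.2 ≠ e.1}
        = n * (n - 1 - m) := by
    intro l
    have hforest : IsRootedForest (build l.1.1) := valid_forest _ l.2
    have hcount : numRoots (build l.1.1) + m = n := by
      have := valid_numRoots l.1.1 l.2
      rwa [l.1.2] at this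
    rw [card_validEdges hforest]
    congr 1
    omega
  simp only [key]
  rw [Finset.sum_const, Finset.card_univ, smul_eq_mul]

lemma card_seq (m : ℕ) :
    Fintype.card (SeqType n m) = ∏ i ∈ Finset.range m, (n * (n - 1 - i)) := by
  induction m with
  | zero => simpa using card_seq_zero
  | succ m ih => rw [card_seq_succ, ih, Finset.prod_range_succ]

end Seq

section Orderings
variable {n : ℕ}

noncomputable def orderingsEquiv (F : Fin n → Option (Fin n)) (m : ℕ)
    (hm : (edges F).card = m) :
    {l : List.Vector (Fin n × Fin n) m // l.1.Nodup ∧ l.1.toFinset = edges F}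
      ≃ (Fin m ↪ {e : Fin n × Fin n // e ∈ edges F}) := by
  refine Equiv.ofBijective (fun l =>
    ⟨fun i => ⟨l.1.1.get (Fin.cast l.1.2.symm i), by
        have h := List.mem_toFinset.mpr (List.get_mem l.1.1 (Fin.cast l.1.2.symm i))
        rw [l.2.2] at h
        exact h⟩, ?_⟩) ⟨?_, ?_⟩
  · intro i j h
    have h2 := Subtype.ext_iff.mp h
    have h3 := List.nodup_iff_injective_get.mp l.2.1 h2
    have h4 : (i : ℕ) = (j : ℕ) := by simpa using congrArg Fin.val h3
    exact Fin.ext h4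
  · -- injective
    rintro ⟨⟨l1, hl1⟩, hnd1, hfin1⟩ ⟨⟨l2, hl2⟩, hnd2, hfin2⟩ h
    apply Subtype.ext
    apply Subtype.ext
    apply List.ext_get (by rw [hl1, hl2])
    intro i h1 h2
    have hi : i < m := by rw [← hl1]; exact h1
    have heq := congrArg (fun (g : Fin m ↪ {e : Fin n × Fin n // e ∈ edges F}) =>
      ((g ⟨i, hi⟩) : {e : Fin n × Fin n // e ∈ edges F}).1) h
    simpa using heq
  · -- surjective
    intro g
    have hinj : Function.Injective (fun i => (g i).1) :=
      fun i j h => g.injective (Subtype.ext h)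
    have hnd : (List.ofFn (fun i => (g i).1)).Nodup := List.nodup_ofFn.mpr hinj
    have hsub : (List.ofFn (fun i => (g i).1)).toFinset ⊆ edges F := by
      intro x hx
      obtain ⟨i, hi⟩ := List.mem_ofFn.mp (List.mem_toFinset.mp hx)
      exact hi ▸ (g i).2
    have hfin : (List.ofFn (fun i => (g i).1)).toFinset = edges F := by
      apply Finset.eq_of_subset_of_card_le hsub
      rw [List.toFinset_card_of_nodup hnd, List.length_ofFn, hm]
    refine ⟨⟨⟨List.ofFn (fun i => (g i).1), by simp⟩, hnd, hfin⟩, ?_⟩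
    apply DFunLike.ext
    intro i
    apply Subtype.ext
    simp [List.get_ofFn]

end Orderings

section Main
variable {n : ℕ}

noncomputable def mainEquiv (k : ℕ) (hk : 1 ≤ k) (hkn : k ≤ n) :
    SeqType n (n - k) ≃
      Σ F : {f : Fin n → Option (Fin n) // IsRootedForest f ∧ numRoots f = k},
        {l : List.Vector (Fin n × Fin n) (n - k) // l.1.Nodup ∧ l.1.toFinset = edges F.1} := by
  refine Equiv.ofBijective (fun s =>
    ⟨⟨build s.1.1, valid_forest _ s.2, by
        have h := valid_numRoots s.1.1 s.2
        rw [s.1.2] at h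
        omega⟩,
      ⟨s.1, (valid_nodup_fst _ s.2).of_map, by
        ext e
        rw [List.mem_toFinset]
        constructor
        · intro he
          simp only [edges, Finset.mem_filter, Finset.mem_univ, true_and]
          exact (build_eq_iff s.1.1 s.2 e.1 e.2).mpr he
        · intro he
          simp only [edges, Finset.mem_filter, Finset.mem_univ, true_and] at he
          exact (build_eq_iff s.1.1 s.2 e.1 e.2).mp he⟩⟩) ⟨?_, ?_⟩
  · rintro ⟨⟨l1, hl1⟩, hv1⟩ ⟨⟨l2, hl2⟩, hv2⟩ h
    have hlists : l1 = l2 := by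
      have := congrArg (fun x => (x.2.1.1 : List (Fin n × Fin n))) h
      simpa using this
    subst hlists
    rfl
  · rintro ⟨⟨F, hF, hkF⟩, ⟨⟨l, hl⟩, hnd, hfin⟩⟩
    have hedges : ∀ e ∈ l, F e.1 = some e.2 := by
      intro e he
      have : e ∈ edges F := by
        rw [← hfin]
        exact List.mem_toFinset.mpr he
      simpa [edges] using this
    have hndfst : (l.map Prod.fst).Nodup := by
      apply List.Nodup.map_on ?_ hnd
      intro x hx y hy hxy
      have h1 : F x.1 = some x.2 := hedges x hx
      have h2 : F y.1 = some y.2 := hedges y hy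
      rw [hxy] at h1
      rw [h1] at h2
      have hsnd : x.2 = y.2 := Option.some_injective _ h2
      exact Prod.ext hxy hsnd
    obtain ⟨hval, hsub⟩ := valid_of_edges hF l hedges hndfst
    have hbuild : build l = F := by
      funext v
      cases hFv : F v with
      | some w =>
          have : (v, w) ∈ edges F := by simp [edges, hFv]
          rw [← hfin] at this
          exact (build_eq_iff l hval v w).mpr (List.mem_toFinset.mp this)
      | none =>
          cases hb : build l v with
          | none => rfl
          | some w =>
              exfalso
              have := hedges (v, w) ((build_eq_iff l hval v w).mp hb)
              simp only at this
              rw [hFv] at this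
              simp at this
    refine ⟨⟨⟨l, hl⟩, hval⟩, ?_⟩
    simp only
    subst hbuild
    rfl

end Main

/-- The number of labeled rooted forests on `n` vertices with exactly `k` roots
equals `(n-1).choose (k-1) * n ^ (n-k)`. -/
theorem numLabeledRootedForests (n k : ℕ) (hn : 1 ≤ n) (hk : 1 ≤ k) :
    Fintype.card {f : Fin n → Option (Fin n) // IsRootedForest f ∧ numRoots f = k} =
      Nat.choose (n - 1) (k - 1) * n ^ (n - k) := by
  by_cases hkn : k ≤ n
  · have h1 := card_seq (n := n) (n - k)
    have h2 : Fintype.card (SeqType n (n - k)) =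
        Fintype.card {f : Fin n → Option (Fin n) // IsRootedForest f ∧ numRoots f = k}
          * Nat.factorial (n - k) := by
      rw [Fintype.card_congr (mainEquiv k hk hkn), Fintype.card_sigma]
      have key : ∀ F : {f : Fin n → Option (Fin n) // IsRootedForest f ∧ numRoots f = k},
          Fintype.card {l : List.Vector (Fin n × Fin n) (n - k) //
            l.1.Nodup ∧ l.1.toFinset = edges F.1} = Nat.factorial (n - k) := by
        intro F
        have hcard : (edges F.1).card = n - k := by rw [card_edges, F.2.2]
        rw [Fintype.card_congr (orderingsEquiv F.1 (n - k) hcard),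
          Fintype.card_embedding_eq, Fintype.card_fin, Fintype.card_coe, hcard,
          Nat.descFactorial_self]
      simp only [key]
      rw [Finset.sum_const, Finset.card_univ, smul_eq_mul]
    have h3 : ∏ i ∈ Finset.range (n - k), (n * (n - 1 - i))
        = n ^ (n - k) * ((n - 1).descFactorial (n - k)) := by
      rw [Finset.prod_mul_distrib, Finset.prod_const, Finset.card_range,
        Nat.descFactorial_eq_prod_range]
    have h4 : (n - 1).descFactorial (n - k) = Nat.factorial (n - k) * (n - 1).choose (n - k) :=
      Nat.descFactorial_eq_factorial_mul_choose _ _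
    have h5 : (n - 1).choose (n - k) = (n - 1).choose (k - 1) := by
      have he : n - k = (n - 1) - (k - 1) := by omega
      rw [he, Nat.choose_symm (by omega)]
    apply Nat.eq_of_mul_eq_mul_right (Nat.factorial_pos (n - k))
    rw [← h2, h1, h3, h4, h5]
    ring
  · push_neg at hkn
    have hzero : Fintype.card
        {f : Fin n → Option (Fin n) // IsRootedForest f ∧ numRoots f = k} = 0 := by
      rw [Fintype.card_eq_zero_iff]
      constructor
      rintro ⟨f, _, hkf⟩
      have : numRoots f ≤ n := by
        unfold numRoots
        calc (Finset.univ.filter fun v => f v = none).card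
            ≤ Finset.univ.card := Finset.card_filter_le _ _
          _ = n := by simp
      omega
    rw [hzero, Nat.choose_eq_zero_of_lt (by omega), Nat.zero_mul]
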